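/- Fix an integer R ≥ 1. Let t : {1,…,R} × ℕ → ℝ be such that for each r, the map n ↦ t(r,n) is monotone nondecreasing, and let e : ℕ → {1,…,R} × ℕ, e(k) = (r_k, m_k), be a bijection such that k ↦ t(r_k, m_k) is strictly increasing. Then m_0 = 0, and for every k ∈ ℕ the set {m_j : j < k and r_j = r_k} equals {0, 1, …, m_k − 1} (both sets being empty when m_k = 0). -/
import Mathlib


/-- combinatorial heart of Proposition 4.2, asynchronous computing.
If `t (r, n)` is the wall-clock time at which replica `r` finishes its `n`-th fragment,
monotone in `n` for each `r`, and `e k = (r_k, m_k)` is a bijective enumeration along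
which the wall-clock times are strictly increasing, then `m_0 = 0` and, for each `k`,
`{m_j : j < k, r_j = r_k} = {0, 1, …, m_k - 1}`. -/
theorem asynchronous_ordering_identity
    (R : ℕ) (hR : 1 ≤ R) (t : Fin R × ℕ → ℝ)
    (hmono : ∀ r : Fin R, Monotone fun n => t (r, n))
    (e : ℕ → Fin R × ℕ) (hbij : Function.Bijective e)
    (hstrict : StrictMono fun k => t (e k)) :
    (e 0).2 = 0 ∧
    ∀ k : ℕ, {n : ℕ | ∃ j, j < k ∧ (e j).1 = (e k).1 ∧ (e j).2 = n}
      = Set.Iio (e k).2 := by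
  have key : ∀ k : ℕ, {n : ℕ | ∃ j, j < k ∧ (e j).1 = (e k).1 ∧ (e j).2 = n}
      = Set.Iio (e k).2 := by
    intro k
    ext n
    simp only [Set.mem_setOf_eq, Set.mem_Iio]
    constructor
    · rintro ⟨j, hjk, hr, hn⟩
      by_contra h
      push_neg at h
      have h1 : t (e k) ≤ t (e j) := by
        have h2 : t ((e k).1, (e k).2) ≤ t ((e j).1, (e j).2) := by
          rw [hr]; exact hmono (e k).1 (by omega)
        simpa using h2
      exact absurd (hstrict hjk) (not_lt.mpr h1)
    · intro hn
      obtain ⟨j, hj⟩ := hbij.2 ((e k).1, n)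
      have hjk : j < k := by
        rcases lt_trichotomy j k with h | h | h
        · exact h
        · exfalso; rw [h] at hj
          have : (e k).2 = n := by rw [hj]
          omega
        · exfalso
          have h1 : t (e j) ≤ t (e k) := by
            have h2 : t ((e k).1, n) ≤ t ((e k).1, (e k).2) :=
              hmono (e k).1 (le_of_lt hn)
            rw [hj]; simpa using h2
          exact absurd (hstrict h) (not_lt.mpr h1)
      exact ⟨j, hjk, by rw [hj], by rw [hj]⟩
  refine ⟨?_, key⟩
  have h0 := key 0
  by_contra h
  have : (0 : ℕ) ∈ Set.Iio (e 0).2 := Nat.pos_of_ne_zero h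
  rw [← h0] at this
  obtain ⟨j, hj, -⟩ := this
  omega
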